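/- Existence of simplicial gluing in a distributive lattice: let L be a distributive lattice and let i, j, x, y : L satisfy x ⊓ i ⊓ j = y ⊓ i ⊓ j and x ⊔ i ⊔ j = y ⊔ i ⊔ j. Set z = (x ⊔ y) ⊓ (x ⊔ i) ⊓ (y ⊔ j). Then z ⊓ j = x ⊓ j, z ⊓ i = y ⊓ i, z ⊔ i ⊔ j = x ⊔ i ⊔ j, and z ⊔ i ⊔ j = y ⊔ i ⊔ j. -/
import Mathlib

private lemma stmt7_aux_inf {L : Type*} [DistribLattice L] (i j x y : L)
    (h₁ : x ⊓ i ⊓ j = y ⊓ i ⊓ j) :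
    ((x ⊔ y) ⊓ (x ⊔ i) ⊓ (y ⊔ j)) ⊓ j = x ⊓ j := by
  have h₁' : x ⊓ (i ⊓ j) = y ⊓ (i ⊓ j) := by
    rw [← inf_assoc, ← inf_assoc, h₁]
  calc ((x ⊔ y) ⊓ (x ⊔ i) ⊓ (y ⊔ j)) ⊓ j
      = (x ⊔ y) ⊓ (x ⊔ i) ⊓ ((y ⊔ j) ⊓ j) := inf_assoc _ _ _
    _ = (x ⊔ y) ⊓ (x ⊔ i) ⊓ j := by
        rw [show (y ⊔ j) ⊓ j = j from inf_eq_right.2 le_sup_right]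
    _ = (x ⊔ y) ⊓ ((x ⊔ i) ⊓ j) := inf_assoc _ _ _
    _ = (x ⊔ y) ⊓ ((x ⊓ j) ⊔ (i ⊓ j)) := by rw [inf_sup_right x i j]
    _ = ((x ⊔ y) ⊓ (x ⊓ j)) ⊔ ((x ⊔ y) ⊓ (i ⊓ j)) := inf_sup_left _ _ _
    _ = (x ⊓ j) ⊔ ((x ⊓ (i ⊓ j)) ⊔ (y ⊓ (i ⊓ j))) := by
        rw [show (x ⊔ y) ⊓ (x ⊓ j) = x ⊓ j from
              inf_eq_right.2 (le_trans inf_le_left le_sup_left),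
           inf_sup_right x y (i ⊓ j)]
    _ = (x ⊓ j) ⊔ ((x ⊓ (i ⊓ j)) ⊔ (x ⊓ (i ⊓ j))) := by rw [← h₁']
    _ = (x ⊓ j) ⊔ (x ⊓ (i ⊓ j)) := by rw [sup_idem]
    _ = x ⊓ j := sup_eq_left.2 (inf_le_inf_left x inf_le_right)

private lemma stmt7_aux_sup {L : Type*} [DistribLattice L] (i j x y : L)
    (h₂ : x ⊔ i ⊔ j = y ⊔ i ⊔ j) :
    ((x ⊔ y) ⊓ (x ⊔ i) ⊓ (y ⊔ j)) ⊔ i ⊔ j = x ⊔ i ⊔ j := by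
  have h₂' : x ⊔ (i ⊔ j) = y ⊔ (i ⊔ j) := by
    rw [← sup_assoc, ← sup_assoc, h₂]
  have hA : x ⊔ y ⊔ i ⊔ j = x ⊔ i ⊔ j := by
    simp only [sup_assoc]
    rw [← h₂', ← sup_assoc x x, sup_idem]
  have hB : x ⊔ i ⊔ i ⊔ j = x ⊔ i ⊔ j := by
    simp only [sup_assoc]
    rw [← sup_assoc i i, sup_idem]
  have hC : y ⊔ j ⊔ i ⊔ j = x ⊔ i ⊔ j := by
    simp only [sup_assoc]
    rw [show j ⊔ (i ⊔ j) = i ⊔ j from sup_eq_right.2 le_sup_right, ← h₂']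
  calc ((x ⊔ y) ⊓ (x ⊔ i) ⊓ (y ⊔ j)) ⊔ i ⊔ j
      = (x ⊔ y ⊔ i ⊔ j) ⊓ (x ⊔ i ⊔ i ⊔ j) ⊓ (y ⊔ j ⊔ i ⊔ j) := by
        simp only [sup_inf_right]
    _ = x ⊔ i ⊔ j := by rw [hA, hB, hC, inf_idem, inf_idem]

theorem stmt7 {L : Type*} [DistribLattice L] (i j x y : L)
    (h₁ : x ⊓ i ⊓ j = y ⊓ i ⊓ j) (h₂ : x ⊔ i ⊔ j = y ⊔ i ⊔ j) :
    ((x ⊔ y) ⊓ (x ⊔ i) ⊓ (y ⊔ j)) ⊓ j = x ⊓ j ∧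
    ((x ⊔ y) ⊓ (x ⊔ i) ⊓ (y ⊔ j)) ⊓ i = y ⊓ i ∧
    ((x ⊔ y) ⊓ (x ⊔ i) ⊓ (y ⊔ j)) ⊔ i ⊔ j = x ⊔ i ⊔ j ∧
    ((x ⊔ y) ⊓ (x ⊔ i) ⊓ (y ⊔ j)) ⊔ i ⊔ j = y ⊔ i ⊔ j := by
  have hz : (x ⊔ y) ⊓ (x ⊔ i) ⊓ (y ⊔ j) = (y ⊔ x) ⊓ (y ⊔ j) ⊓ (x ⊔ i) := by
    rw [sup_comm y x, inf_right_comm]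
  have h₁sym : y ⊓ j ⊓ i = x ⊓ j ⊓ i := by
    rw [inf_right_comm y j i, inf_right_comm x j i, h₁]
  refine ⟨stmt7_aux_inf i j x y h₁, ?_, stmt7_aux_sup i j x y h₂, ?_⟩
  · rw [hz]; exact stmt7_aux_inf j i y x h₁sym
  · rw [stmt7_aux_sup i j x y h₂, h₂]
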